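/- Let G and H be groups and φ : G → H an isomorphism of their power graphs. Then φ maps the set of elements of finite order of G onto the set of elements of finite order of H. -/

import Mathlib

def powerGraph (G : Type*) [Group G] : SimpleGraph G where
  Adj x y := x ≠ y ∧ ((∃ n : ℤ, n ≠ 0 ∧ y = x ^ n) ∨ ∃ n : ℤ, n ≠ 0 ∧ x = y ^ n)
  symm := ⟨fun _ _ ⟨h, h2⟩ => ⟨h.symm, h2.symm⟩⟩
  loopless := ⟨fun _ ⟨h, _⟩ => h rfl⟩

def enhancedPowerGraph (G : Type*) [Group G] : SimpleGraph G where
  Adj x y := x ≠ y ∧ ∃ z : G, x ∈ Subgroup.zpowers z ∧ y ∈ Subgroup.zpowers z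
  symm := ⟨fun _ _ ⟨h, z, hx, hy⟩ => ⟨h.symm, z, hy, hx⟩⟩
  loopless := ⟨fun _ ⟨h, _⟩ => h rfl⟩

open Subgroup

namespace PGaux

/-- closed neighborhood -/
def cnb {V : Type*} (Γ : SimpleGraph V) (a : V) : Set V := {z | z = a ∨ Γ.Adj a z}

lemma self_mem_cnb {V : Type*} (Γ : SimpleGraph V) (a : V) : a ∈ cnb Γ a := Or.inl rfl

lemma mem_cnb_of_adj {V : Type*} {Γ : SimpleGraph V} {a z : V} (h : Γ.Adj a z) :
    z ∈ cnb Γ a := Or.inr h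

variable {G : Type*} [Group G]

lemma pg_adj_iff {x y : G} :
    (powerGraph G).Adj x y ↔ x ≠ y ∧ ((∃ n : ℤ, n ≠ 0 ∧ y = x ^ n) ∨ ∃ n : ℤ, n ≠ 0 ∧ x = y ^ n) :=
  Iff.rfl

lemma fin_of_adj {x y : G} (h : (powerGraph G).Adj x y) (hx : IsOfFinOrder x) :
    IsOfFinOrder y := by
  obtain ⟨-, h⟩ := h
  rcases h with ⟨n, hn, rfl⟩ | ⟨n, hn, hxy⟩
  · exact hx.zpow
  · obtain ⟨m, hm, hxm⟩ := isOfFinOrder_iff_pow_eq_one.mp hx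
    refine isOfFinOrder_iff_zpow_eq_one.mpr ⟨n * m, mul_ne_zero hn ?_, ?_⟩
    · exact_mod_cast hm.ne'
    · rw [zpow_mul, ← hxy, zpow_natCast, hxm]

lemma fin_of_reachable {x y : G} (h : (powerGraph G).Reachable x y) (hx : IsOfFinOrder x) :
    IsOfFinOrder y := by
  obtain ⟨w⟩ := h
  induction w with
  | nil => exact hx
  | cons h p ih => exact ih (fin_of_adj h hx)

lemma adj_one {y : G} (hy : IsOfFinOrder y) (hy1 : y ≠ 1) : (powerGraph G).Adj 1 y := by
  refine ⟨fun h => hy1 h.symm, Or.inr ⟨(orderOf y : ℤ), ?_, ?_⟩⟩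
  · exact_mod_cast hy.orderOf_pos.ne'
  · rw [zpow_natCast, pow_orderOf_eq_one]

lemma cnb_one : cnb (powerGraph G) (1 : G) = {z : G | IsOfFinOrder z} := by
  ext z
  constructor
  · rintro (rfl | h)
    · exact IsOfFinOrder.one
    · exact fin_of_adj h IsOfFinOrder.one
  · intro hz
    by_cases h1 : z = 1
    · exact Or.inl h1
    · exact Or.inr (adj_one hz h1)

lemma reachable_of_fin {x y : G} (hx : IsOfFinOrder x) (hy : IsOfFinOrder y) :
    (powerGraph G).Reachable x y := by
  by_cases hxy : x = y
  · exact hxy ▸ SimpleGraph.Reachable.refl x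
  by_cases hx1 : x = 1
  · subst hx1; exact (adj_one hy (fun h => hxy h.symm)).reachable
  by_cases hy1 : y = 1
  · subst hy1; exact ((adj_one hx hx1).symm).reachable
  · exact ((adj_one hx hx1).symm.reachable).trans (adj_one hy hy1).reachable

lemma adj_iff_fin {y z : G} (hy : IsOfFinOrder y) (hy1 : y ≠ 1) :
    (powerGraph G).Adj y z ↔ z ≠ y ∧ (z ∈ zpowers y ∨ y ∈ zpowers z) := by
  constructor
  · rintro ⟨hne, h⟩
    refine ⟨fun h' => hne h'.symm, ?_⟩
    rcases h with ⟨n, hn, rfl⟩ | ⟨n, hn, hxy⟩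
    · exact Or.inl ⟨n, rfl⟩
    · exact Or.inr ⟨n, hxy.symm⟩
  · rintro ⟨hne, h⟩
    refine ⟨fun h' => hne h'.symm, ?_⟩
    rcases h with ⟨k, hk⟩ | ⟨k, hk⟩
    all_goals simp only [] at hk
    · by_cases hk0 : k = 0
      · refine Or.inl ⟨(orderOf y : ℤ), ?_, ?_⟩
        · exact_mod_cast hy.orderOf_pos.ne'
        · rw [← hk, hk0, zpow_zero, zpow_natCast, pow_orderOf_eq_one]
          
      · exact Or.inl ⟨k, hk0, hk.symm⟩
    · have hk0 : k ≠ 0 := by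
        rintro rfl
        exact hy1 (by simpa using hk.symm)
      exact Or.inr ⟨k, hk0, hk.symm⟩

end PGaux

section
open Subgroup PGaux
variable {G : Type*} [Group G]

lemma cnb_sub_of_zpowers_eq {y z : G} (hy : IsOfFinOrder y) (hz : IsOfFinOrder z)
    (hy1 : y ≠ 1) (hz1 : z ≠ 1) (h : zpowers y = zpowers z) :
    cnb (powerGraph G) y ⊆ cnb (powerGraph G) z := by
  intro w hw
  by_cases hwz : w = z
  · exact Or.inl hwz
  rcases hw with rfl | hadj
  · refine Or.inr ((adj_iff_fin hz hz1).mpr ⟨hwz, Or.inl ?_⟩)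
    rw [← h]; exact mem_zpowers w
  · obtain ⟨hne, hcase⟩ := (adj_iff_fin hy hy1).mp hadj
    refine Or.inr ((adj_iff_fin hz hz1).mpr ⟨hwz, ?_⟩)
    rcases hcase with hmem | hmem
    · exact Or.inl (h ▸ hmem)
    · refine Or.inr ?_
      have : zpowers y ≤ zpowers w := zpowers_le.mpr hmem
      exact this (h.symm ▸ mem_zpowers z)

lemma cnb_eq_of_zpowers_eq {y z : G} (hy : IsOfFinOrder y) (hz : IsOfFinOrder z)
    (hy1 : y ≠ 1) (hz1 : z ≠ 1) (h : zpowers y = zpowers z) :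
    cnb (powerGraph G) y = cnb (powerGraph G) z :=
  Set.Subset.antisymm (cnb_sub_of_zpowers_eq hy hz hy1 hz1 h)
    (cnb_sub_of_zpowers_eq hz hy hz1 hy1 h.symm)

lemma zpowers_eq_of_mem {y z : G} (hz : IsOfFinOrder z) (hyz : y ∈ zpowers z)
    (h : orderOf y = orderOf z) : zpowers y = zpowers z := by
  refine le_antisymm (zpowers_le.mpr hyz) (zpowers_le.mpr ?_)
  obtain ⟨m, hm'⟩ := hz.mem_powers_iff_mem_zpowers.mpr hyz
  have hm : z ^ m = y := hm'
  have hcop : (Nat.gcd (orderOf z) m) = 1 := by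
    have h1 : orderOf (z ^ m) = orderOf z / Nat.gcd (orderOf z) m := IsOfFinOrder.orderOf_pow z m hz
    rw [hm, h] at h1
    have hdvd : Nat.gcd (orderOf z) m ∣ orderOf z := Nat.gcd_dvd_left _ _
    have hpos : orderOf z ≠ 0 := hz.orderOf_pos.ne'
    rcases (Nat.div_eq_self).mp h1.symm with h' | h'
    · exact absurd h' hpos
    · exact h'
  obtain ⟨j, hj⟩ := exists_pow_eq_self_of_coprime (Nat.coprime_comm.mp hcop)
  rw [hm] at hj
  exact mem_zpowers_iff.mpr ⟨(j : ℤ), by rw [zpow_natCast, hj]⟩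

lemma eq_of_mem_zpowers_two {a b : G} (h2 : orderOf a = 2) (hmem : b ∈ zpowers a)
    (hb : b ≠ 1) : b = a := by
  have ha : IsOfFinOrder a := by
    rw [← orderOf_pos_iff, h2]; norm_num
  obtain ⟨m, hm'⟩ := ha.mem_powers_iff_mem_zpowers.mpr hmem
  have hm : a ^ m = b := hm'
  rw [← pow_mod_orderOf, h2] at hm
  have : m % 2 = 0 ∨ m % 2 = 1 := by omega
  rcases this with h | h
  · rw [h, pow_zero] at hm; exact absurd hm.symm hb
  · rw [h, pow_one] at hm; exact hm.symm

lemma pow_ne_one_of_orderOf {y : G} {n : ℕ} (hy : IsOfFinOrder y)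
    (h : ¬ orderOf y ∣ n) : y ^ n ≠ 1 := fun h' => h (orderOf_dvd_of_pow_eq_one h')

/-- powers with coprime exponents are twins -/
lemma cnb_pow_coprime {y : G} {a : ℕ} (hy : IsOfFinOrder y) (hy1 : orderOf y ≠ 1)
    (ha : Nat.Coprime a (orderOf y)) :
    cnb (powerGraph G) (y ^ a) = cnb (powerGraph G) y := by
  have hyne1 : y ≠ 1 := fun h => hy1 (by rw [h, orderOf_one])
  have horda : orderOf (y ^ a) = orderOf y := Nat.Coprime.orderOf_pow (Nat.coprime_comm.mp ha)
  have hzp : zpowers (y ^ a) = zpowers y := by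
    refine le_antisymm (zpowers_le.mpr (mem_zpowers_iff.mpr ⟨(a : ℤ), by rw [zpow_natCast]⟩))
      (zpowers_le.mpr ?_)
    obtain ⟨j, hj⟩ := exists_pow_eq_self_of_coprime ha
    exact mem_zpowers_iff.mpr ⟨(j : ℤ), by rw [zpow_natCast, hj]⟩
  refine cnb_eq_of_zpowers_eq (hy.pow) hy ?_ hyne1 hzp
  intro h
  rw [h, orderOf_one] at horda
  exact hy1 horda.symm

lemma pow_inj_lt {y : G} {i j : ℕ} (hi : i < orderOf y) (hj : j < orderOf y)
    (h : y ^ i = y ^ j) : i = j := by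
  have := pow_eq_pow_iff_modEq.mp h
  unfold Nat.ModEq at this
  rwa [Nat.mod_eq_of_lt hi, Nat.mod_eq_of_lt hj] at this

end
section
open Subgroup PGaux
variable {G : Type*} [Group G]

lemma third_unit {n : ℕ} (h5 : 5 ≤ n) (h6 : n ≠ 6) :
    ∃ a, Nat.Coprime a n ∧ 2 ≤ a ∧ a ≤ n - 2 := by
  rcases Nat.even_or_odd n with he | ho
  · -- n even, so n ≥ 8
    obtain ⟨c, hc⟩ := he
    have h8 : 8 ≤ n := by omega
    rcases Nat.even_or_odd (n / 2) with he2 | ho2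
    · -- 4 ∣ n, n = 4k, a = 2k+1 = n/2+1
      obtain ⟨k, hk⟩ := he2
      have hn4 : n = 4 * k := by omega
      refine ⟨2 * k + 1, ?_, by omega, by omega⟩
      rw [hn4]
      have h4 : (4 : ℕ) * k = 4 * k := rfl
      have hc4 : Nat.Coprime (2 * k + 1) 4 := by
        have : (4 : ℕ) = 2 ^ 2 := by norm_num
        rw [this]
        exact (Nat.coprime_two_right.mpr (by exact ⟨k, by ring⟩)).pow_right 2
      have hck : Nat.Coprime (2 * k + 1) k := by
        have := Nat.coprime_add_mul_right_left 1 k 2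
        simpa [add_comm] using this.mpr (Nat.coprime_one_left k)
      exact hc4.mul_right hck
    · -- n ≡ 2 mod 4 : n = 2m, m odd ≥ 5 ; a = m - 2
      obtain ⟨t, ht⟩ := ho2
      -- n/2 = 2t+1, and n = 2*(n/2)
      have hn2 : n = 2 * (2 * t + 1) := by omega
      have ht2 : 2 ≤ t := by omega
      refine ⟨2 * t - 1, ?_, by omega, by omega⟩
      have heq : n = 4 + (2 * t - 1) * 2 := by omega
      rw [heq]
      rw [Nat.coprime_add_mul_left_right (2 * t - 1) 4 2]
      have : (4 : ℕ) = 2 ^ 2 := by norm_num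
      rw [this]
      exact (Nat.coprime_two_right.mpr ⟨t - 1, by omega⟩).pow_right 2
  · exact ⟨2, Nat.coprime_two_left.mpr ho, le_refl 2, by omega⟩

lemma three_twins {y : G} (hy : IsOfFinOrder y)
    (hn : ¬(orderOf y = 1 ∨ orderOf y = 2 ∨ orderOf y = 3 ∨ orderOf y = 4 ∨ orderOf y = 6)) :
    ∃ b c : G, b ≠ y ∧ c ≠ y ∧ b ≠ c ∧
      cnb (powerGraph G) b = cnb (powerGraph G) y ∧ cnb (powerGraph G) c = cnb (powerGraph G) y := by
  push_neg at hn
  obtain ⟨hn1, hn2, hn3, hn4, hn6⟩ := hn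
  have hpos : 0 < orderOf y := hy.orderOf_pos
  have h5 : 5 ≤ orderOf y := by omega
  obtain ⟨a, hcop, ha2, han⟩ := third_unit h5 hn6
  have hcop' : Nat.Coprime (orderOf y - 1) (orderOf y) := by
    obtain ⟨M, hM⟩ : ∃ M, orderOf y = 1 + M := ⟨orderOf y - 1, by omega⟩
    have hM' : orderOf y - 1 = M := by omega
    rw [hM']
    rw [hM]
    rw [Nat.coprime_add_self_right]
    exact Nat.coprime_one_right _
  have key : ∀ i j : ℕ, i < orderOf y → j < orderOf y → i ≠ j → y ^ i ≠ y ^ j := by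
    intro i j hi hj hij h
    exact hij (pow_inj_lt hi hj h)
  refine ⟨y ^ (orderOf y - 1), y ^ a, ?_, ?_, ?_, ?_, ?_⟩
  · intro h
    conv_rhs at h => rw [← pow_one y]
    exact key (orderOf y - 1) 1 (by omega) (by omega) (by omega) h
  · intro h
    conv_rhs at h => rw [← pow_one y]
    exact key a 1 (by omega) (by omega) (by omega) h
  · exact key (orderOf y - 1) a (by omega) (by omega) (by omega)
  · exact cnb_pow_coprime hy hn1 hcop'
  · exact cnb_pow_coprime hy hn1 hcop

end
section
open Subgroup PGaux
variable {G : Type*} [Group G]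

lemma torsion_main (hT : {g : G | IsOfFinOrder g}.Infinite) :
    ∃ y : G, IsOfFinOrder y ∧
      ((∃ b c : G, b ≠ y ∧ c ≠ y ∧ b ≠ c ∧
          cnb (powerGraph G) b = cnb (powerGraph G) y ∧
          cnb (powerGraph G) c = cnb (powerGraph G) y) ∨
        (powerGraph G).IsClique (cnb (powerGraph G) y) ∨
        (∀ z : G, cnb (powerGraph G) z = cnb (powerGraph G) y → z = y)) := by
  by_cases hA : ∃ y : G, IsOfFinOrder y ∧
      ¬(orderOf y = 1 ∨ orderOf y = 2 ∨ orderOf y = 3 ∨ orderOf y = 4 ∨ orderOf y = 6)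
  · obtain ⟨y, hy, hn⟩ := hA
    exact ⟨y, hy, Or.inl (three_twins hy hn)⟩
  push_neg at hA
  by_cases hu : ∃ u : G, u ≠ 1 ∧ cnb (powerGraph G) u = cnb (powerGraph G) (1 : G)
  swap
  · refine ⟨1, IsOfFinOrder.one, Or.inr (Or.inr ?_)⟩
    intro z hz
    by_contra hne
    exact hu ⟨z, hne, hz⟩
  obtain ⟨u, hu1, hucnb⟩ := hu
  have huT : IsOfFinOrder u := by
    have h := self_mem_cnb (powerGraph G) u
    rw [hucnb, cnb_one] at h
    exact h
  have hNu : cnb (powerGraph G) u = {g : G | IsOfFinOrder g} := by rw [hucnb, cnb_one]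
  have hkey : ∀ w : G, IsOfFinOrder w →
      w ∈ zpowers u ∨ (u ∈ zpowers w ∧ orderOf u ∣ orderOf w) := by
    intro w hw
    by_cases hwu : w = u
    · exact Or.inl (hwu ▸ mem_zpowers u)
    · have hmem : w ∈ cnb (powerGraph G) u := by rw [hNu]; exact hw
      rcases hmem with h | h
      · exact absurd h hwu
      · obtain ⟨hne, hc⟩ := (adj_iff_fin huT hu1).mp h
        rcases hc with h' | h'
        · exact Or.inl h'
        · exact Or.inr ⟨h', orderOf_dvd_of_mem_zpowers h'⟩
  have hsub : ¬ ({g : G | IsOfFinOrder g} ⊆ (zpowers u : Set G)) := by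
    intro hsub
    exact hT (huT.finite_zpowers.subset hsub)
  have hordu1 : orderOf u ≠ 1 := fun h => hu1 (orderOf_eq_one_iff.mp h)
  rcases hA u huT with h1u | h2u | h3u | h4u | h6u
  · exact absurd h1u hordu1
  · -- orderOf u = 2 : quaternion-like case, produces a clique
    have h3' : ∀ w : G, IsOfFinOrder w → orderOf w ≠ 3 := by
      intro w hw hw3
      rcases hkey w hw with h | ⟨_, hdvd⟩
      · have hd := orderOf_dvd_of_mem_zpowers h
        rw [hw3, h2u] at hd; omega
      · rw [h2u, hw3] at hdvd; omega
    have h6' : ∀ w : G, IsOfFinOrder w → orderOf w ≠ 6 := by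
      intro w hw hw6
      have h3 : orderOf (w ^ 2) = 3 := by
        rw [IsOfFinOrder.orderOf_pow w 2 hw, hw6]
        decide
      exact h3' _ hw.pow h3
    have hord : ∀ w : G, IsOfFinOrder w →
        orderOf w = 1 ∨ orderOf w = 2 ∨ orderOf w = 4 := by
      intro w hw
      have := hA w hw
      have := h3' w hw
      have := h6' w hw
      omega
    have huniq : ∀ w : G, IsOfFinOrder w → orderOf w = 2 → w = u := by
      intro w hw hw2
      rcases hkey w hw with h | ⟨hmem, _⟩
      · exact eq_of_mem_zpowers_two h2u h
          (fun h1 => by rw [h1, orderOf_one] at hw2; omega)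
      · exact (eq_of_mem_zpowers_two hw2 hmem hu1).symm
    have hy4 : ∃ y : G, IsOfFinOrder y ∧ orderOf y = 4 := by
      by_contra hno
      push_neg at hno
      apply hT
      apply Set.Finite.subset ((Set.finite_singleton u).insert (1 : G))
      intro w hw
      rcases hord w hw with h | h | h
      · simp [orderOf_eq_one_iff.mp h]
      · simp [huniq w hw h]
      · exact absurd h (hno w hw)
    obtain ⟨y, hy, hy4⟩ := hy4
    have hy1 : y ≠ 1 := fun h => by rw [h, orderOf_one] at hy4; omega
    have hyu : y ≠ u := fun h => by rw [h, h2u] at hy4; omega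
    have hysq : y ^ 2 = u := by
      refine huniq _ hy.pow ?_
      rw [IsOfFinOrder.orderOf_pow y 2 hy, hy4]
      decide
    have hy4one : y ^ 4 = 1 := by rw [← hy4]; exact pow_orderOf_eq_one y
    have hyinv : y ^ 3 = y⁻¹ := by
      apply eq_inv_of_mul_eq_one_left
      rw [← pow_succ]
      exact hy4one
    have hu2 : u ^ 2 = 1 := by rw [← h2u]; exact pow_orderOf_eq_one u
    have huinv : u⁻¹ = u := by
      apply inv_eq_of_mul_eq_one_right
      rw [← pow_two]; exact hu2
    have nyi1 : y⁻¹ ≠ 1 := fun h => hy1 (inv_eq_one.mp h)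
    have nyiu : y⁻¹ ≠ u := by
      intro h
      have : orderOf y⁻¹ = 2 := by rw [h, h2u]
      rw [orderOf_inv, hy4] at this; omega
    have nyyi : y ≠ y⁻¹ := by
      intro h
      have : y ^ 2 = 1 := by rw [pow_two]; nth_rewrite 2 [h]; exact mul_inv_cancel y
      have := orderOf_dvd_of_pow_eq_one this
      rw [hy4] at this; omega
    -- adjacency facts
    have A1 : (powerGraph G).Adj 1 u := adj_one huT hu1
    have A2 : (powerGraph G).Adj 1 y := adj_one hy hy1
    have A3 : (powerGraph G).Adj 1 y⁻¹ := adj_one hy.inv nyi1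
    have A4 : (powerGraph G).Adj y u := by
      refine ⟨hyu, Or.inl ⟨(2 : ℤ), by norm_num, ?_⟩⟩
      rw [show (2:ℤ) = ((2:ℕ):ℤ) by norm_num, zpow_natCast, hysq]
    have A5 : (powerGraph G).Adj y⁻¹ u := by
      refine ⟨nyiu, Or.inl ⟨(2 : ℤ), by norm_num, ?_⟩⟩
      rw [show (2:ℤ) = ((2:ℕ):ℤ) by norm_num, zpow_natCast, inv_pow, hysq, huinv]
    have A6 : (powerGraph G).Adj y y⁻¹ := ⟨nyyi, Or.inl ⟨-1, by norm_num, (zpow_neg_one y).symm⟩⟩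
    have hclS : (powerGraph G).IsClique {(1:G), u, y, y⁻¹} := by
      rw [SimpleGraph.isClique_iff]
      intro a ha b hb hab
      simp only [Set.mem_insert_iff, Set.mem_singleton_iff] at ha hb
      rcases ha with rfl | rfl | rfl | rfl <;> rcases hb with rfl | rfl | rfl | rfl <;>
        first
          | exact absurd rfl hab
          | exact A1 | exact A2 | exact A3 | exact A4 | exact A5 | exact A6
          | exact A1.symm | exact A2.symm | exact A3.symm
          | exact A4.symm | exact A5.symm | exact A6.symm
    have hsubS : cnb (powerGraph G) y ⊆ {(1:G), u, y, y⁻¹} := by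
      intro w hw
      have hwzp : w ∈ zpowers y := by
        rcases hw with heqw | hadj
        · rw [heqw]; exact mem_zpowers y
        · obtain ⟨hne, hc⟩ := (adj_iff_fin hy hy1).mp hadj
          rcases hc with h | h
          · exact h
          · have hwT : IsOfFinOrder w := fin_of_adj hadj hy
            have hdvd : orderOf y ∣ orderOf w := orderOf_dvd_of_mem_zpowers h
            have hw4 : orderOf y = orderOf w := by
              rw [hy4] at hdvd ⊢
              rcases hord w hwT with h' | h' | h' <;> omega
            have heq := zpowers_eq_of_mem hwT h hw4
            rw [heq]
            exact mem_zpowers w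
      obtain ⟨m, hm'⟩ := hy.mem_powers_iff_mem_zpowers.mpr hwzp
      have hm : y ^ m = w := hm'
      rw [← pow_mod_orderOf, hy4] at hm
      have hc4 : m % 4 = 0 ∨ m % 4 = 1 ∨ m % 4 = 2 ∨ m % 4 = 3 := by omega
      simp only [Set.mem_insert_iff, Set.mem_singleton_iff]
      rcases hc4 with h | h | h | h <;> rw [h] at hm
      · rw [pow_zero] at hm; exact Or.inl hm.symm
      · rw [pow_one] at hm; exact Or.inr (Or.inr (Or.inl hm.symm))
      · rw [hysq] at hm; exact Or.inr (Or.inl hm.symm)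
      · rw [hyinv] at hm; exact Or.inr (Or.inr (Or.inr hm.symm))
    exact ⟨y, hy, Or.inr (Or.inl (hclS.subset hsubS))⟩
  · -- orderOf u = 3 : contradiction
    exfalso
    have h2' : ∀ w : G, IsOfFinOrder w → orderOf w ≠ 2 := by
      intro w hw hw2
      rcases hkey w hw with h | ⟨_, hdvd⟩
      · have hd := orderOf_dvd_of_mem_zpowers h
        rw [hw2, h3u] at hd; omega
      · rw [h3u, hw2] at hdvd; omega
    have h6' : ∀ w : G, IsOfFinOrder w → orderOf w ≠ 6 := by
      intro w hw hw6
      have h3 : orderOf (w ^ 3) = 2 := by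
        rw [IsOfFinOrder.orderOf_pow w 3 hw, hw6]
        decide
      exact h2' _ hw.pow h3
    have h4' : ∀ w : G, IsOfFinOrder w → orderOf w ≠ 4 := by
      intro w hw hw4
      have h3 : orderOf (w ^ 2) = 2 := by
        rw [IsOfFinOrder.orderOf_pow w 2 hw, hw4]
        decide
      exact h2' _ hw.pow h3
    apply hsub
    intro w hw
    rcases hkey w hw with h | ⟨hmem, hdvd⟩
    · exact h
    · have hw3 : orderOf u = orderOf w := by
        have := hA w hw
        have := h2' w hw
        have := h6' w hw
        have := h4' w hw
        rw [h3u] at *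
        omega
      have heq := zpowers_eq_of_mem hw hmem hw3
      have : w ∈ zpowers u := by rw [heq]; exact mem_zpowers w
      exact this
  · -- orderOf u = 4 : contradiction
    exfalso
    apply hsub
    intro w hw
    rcases hkey w hw with h | ⟨hmem, hdvd⟩
    · exact h
    · have hw4 : orderOf u = orderOf w := by
        have := hA w hw
        rw [h4u] at *
        omega
      have heq := zpowers_eq_of_mem hw hmem hw4
      have : w ∈ zpowers u := by rw [heq]; exact mem_zpowers w
      exact this
  · -- orderOf u = 6 : contradiction
    exfalso
    apply hsub
    intro w hw
    rcases hkey w hw with h | ⟨hmem, hdvd⟩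
    · exact h
    · have hw6 : orderOf u = orderOf w := by
        have := hA w hw
        rw [h6u] at *
        omega
      have heq := zpowers_eq_of_mem hw hmem hw6
      have : w ∈ zpowers u := by rw [heq]; exact mem_zpowers w
      exact this

end
section
open Subgroup PGaux
variable {G : Type*} [Group G]

lemma zpow_inj_of_inf {x : G} (hx : ¬ IsOfFinOrder x) {m n : ℤ} (h : x ^ m = x ^ n) :
    m = n := injective_zpow_iff_not_isOfFinOrder.mpr hx h

lemma adj_zpow_of_inf {x : G} (hx : ¬ IsOfFinOrder x) {n : ℤ} (h0 : n ≠ 0) (h1 : n ≠ 1) :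
    (powerGraph G).Adj x (x ^ n) := by
  refine ⟨fun h => ?_, Or.inl ⟨n, h0, rfl⟩⟩
  have : x ^ (1 : ℤ) = x ^ n := by rw [zpow_one]; exact h
  exact h1 (zpow_inj_of_inf hx this).symm

lemma not_adj_zpow_zpow {x : G} (hx : ¬ IsOfFinOrder x) {m n : ℤ}
    (hm : ¬ m ∣ n) (hn : ¬ n ∣ m) : ¬ (powerGraph G).Adj (x ^ m) (x ^ n) := by
  rintro ⟨hne, h⟩
  rcases h with ⟨k, hk0, hk⟩ | ⟨k, hk0, hk⟩
  · rw [← zpow_mul] at hk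
    exact hm ⟨k, zpow_inj_of_inf hx hk⟩
  · rw [← zpow_mul] at hk
    exact hn ⟨k, zpow_inj_of_inf hx hk⟩

lemma not_dvd_absSucc {n : ℤ} (hn0 : n ≠ 0) (hn1 : n ≠ 1) (hnm1 : n ≠ -1) :
    ¬ n ∣ ((n.natAbs + 1 : ℕ) : ℤ) := by
  intro hd
  have h1 : n ∣ (n.natAbs : ℤ) := Int.dvd_natAbs.mpr dvd_rfl
  have h2 : n ∣ ((n.natAbs + 1 : ℕ) : ℤ) - (n.natAbs : ℤ) := dvd_sub hd h1
  have h3 : ((n.natAbs + 1 : ℕ) : ℤ) - (n.natAbs : ℤ) = 1 := by push_cast; ring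
  rw [h3] at h2
  have := isUnit_of_dvd_one h2
  rw [Int.isUnit_iff] at this
  rcases this with h | h <;> [exact hn1 h; exact hnm1 h]

lemma not_absSucc_dvd {n : ℤ} (hn0 : n ≠ 0) :
    ¬ ((n.natAbs + 1 : ℕ) : ℤ) ∣ n := by
  intro hd
  have h1 : (n.natAbs + 1) ∣ n.natAbs := by
    have h := Int.natAbs_dvd_natAbs.mpr hd
    rwa [Int.natAbs_natCast] at h
  have := Nat.le_of_dvd (by omega) h1
  omega

lemma not_fin_inv {x : G} (hx : ¬ IsOfFinOrder x) : ¬ IsOfFinOrder x⁻¹ := by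
  intro h
  have := h.inv
  rw [inv_inv] at this
  exact hx this

lemma adj_inv_of_inf {x : G} (hx : ¬ IsOfFinOrder x) : (powerGraph G).Adj x x⁻¹ := by
  have := adj_zpow_of_inf hx (n := -1) (by norm_num) (by norm_num)
  rwa [zpow_neg_one] at this

lemma cnb_inv_subset {x : G} (hx : ¬ IsOfFinOrder x) :
    cnb (powerGraph G) x⁻¹ ⊆ cnb (powerGraph G) x := by
  intro w hw
  rcases hw with heq | hadj
  · rw [heq]
    exact mem_cnb_of_adj (adj_inv_of_inf hx)
  · by_cases hwx : w = x
    · rw [hwx]; exact self_mem_cnb _ _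
    obtain ⟨hne, hc⟩ := hadj
    refine Or.inr ⟨fun h => hwx h.symm, ?_⟩
    rcases hc with ⟨n, hn0, hn⟩ | ⟨n, hn0, hn⟩
    · refine Or.inl ⟨-n, neg_ne_zero.mpr hn0, ?_⟩
      rw [hn, inv_zpow, ← zpow_neg]
    · refine Or.inr ⟨-n, neg_ne_zero.mpr hn0, ?_⟩
      rw [zpow_neg, ← hn, inv_inv]

lemma cnb_inv_of_inf {x : G} (hx : ¬ IsOfFinOrder x) :
    cnb (powerGraph G) x⁻¹ = cnb (powerGraph G) x := by
  refine Set.Subset.antisymm (cnb_inv_subset hx) ?_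
  have := cnb_inv_subset (not_fin_inv hx)
  rwa [inv_inv] at this

lemma not_clique_of_inf {x : G} (hx : ¬ IsOfFinOrder x) :
    ¬ (powerGraph G).IsClique (cnb (powerGraph G) x) := by
  intro hcl
  have h2 : x ^ (2:ℤ) ∈ cnb (powerGraph G) x :=
    mem_cnb_of_adj (adj_zpow_of_inf hx (by norm_num) (by norm_num))
  have h3 : x ^ (3:ℤ) ∈ cnb (powerGraph G) x :=
    mem_cnb_of_adj (adj_zpow_of_inf hx (by norm_num) (by norm_num))
  have hne : x ^ (2:ℤ) ≠ x ^ (3:ℤ) := fun h => by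
    have := zpow_inj_of_inf hx h; omega
  exact not_adj_zpow_zpow hx (by decide) (by decide) (hcl h2 h3 hne)

lemma twin_of_inf {x z : G} (hx : ¬ IsOfFinOrder x)
    (h : cnb (powerGraph G) z = cnb (powerGraph G) x) : z = x ∨ z = x⁻¹ := by
  have hz : z ∈ cnb (powerGraph G) x := h ▸ self_mem_cnb _ z
  rcases hz with heq | hadj
  · exact Or.inl heq
  obtain ⟨hne, hc⟩ := hadj
  rcases hc with ⟨n, hn0, hzn⟩ | ⟨n, hn0, hxn⟩
  · -- z = x ^ n
    rcases eq_or_ne n 1 with rfl | hn1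
    · exact Or.inl (by rw [hzn, zpow_one])
    rcases eq_or_ne n (-1) with rfl | hnm1
    · exact Or.inr (by rw [hzn, zpow_neg_one])
    exfalso
    have hmem : x ^ ((n.natAbs + 1 : ℕ) : ℤ) ∈ cnb (powerGraph G) x :=
      mem_cnb_of_adj (adj_zpow_of_inf hx (by omega) (by omega))
    rw [← h, hzn] at hmem
    rcases hmem with heq | hadj2
    · have := zpow_inj_of_inf hx heq
      omega
    · exact not_adj_zpow_zpow hx (not_dvd_absSucc hn0 hn1 hnm1) (not_absSucc_dvd hn0) hadj2
  · -- x = z ^ n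
    have hzinf : ¬ IsOfFinOrder z := fun hf => hx (hxn ▸ hf.zpow)
    rcases eq_or_ne n 1 with rfl | hn1
    · rw [zpow_one] at hxn
      exact Or.inl hxn.symm
    rcases eq_or_ne n (-1) with rfl | hnm1
    · rw [zpow_neg_one] at hxn
      exact Or.inr (by rw [hxn, inv_inv])
    exfalso
    have hmem : z ^ ((n.natAbs + 1 : ℕ) : ℤ) ∈ cnb (powerGraph G) z :=
      mem_cnb_of_adj (adj_zpow_of_inf hzinf (by omega) (by omega))
    rw [h] at hmem
    rcases hmem with heq | hadj2
    · rw [hxn] at heq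
      have := zpow_inj_of_inf hzinf heq
      omega
    · rw [hxn] at hadj2
      exact not_adj_zpow_zpow hzinf (not_dvd_absSucc hn0 hn1 hnm1) (not_absSucc_dvd hn0) hadj2

end
section
open Subgroup PGaux
variable {G : Type*} [Group G] {H : Type*} [Group H]

lemma map_cnb (φ : powerGraph G ≃g powerGraph H) (a : G) :
    ⇑φ '' cnb (powerGraph G) a = cnb (powerGraph H) (φ a) := by
  ext z
  constructor
  · rintro ⟨w, hw, rfl⟩
    rcases hw with heq | hadj
    · rw [heq]; exact self_mem_cnb _ _
    · exact mem_cnb_of_adj (φ.map_rel_iff.mpr hadj)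
  · intro hz
    rcases hz with heq | hadj
    · exact ⟨a, self_mem_cnb _ _, heq.symm⟩
    · refine ⟨φ.symm z, ?_, φ.apply_symm_apply z⟩
      apply mem_cnb_of_adj
      have : (powerGraph H).Adj (φ a) (φ (φ.symm z)) := by
        rwa [φ.apply_symm_apply]
      exact φ.map_rel_iff.mp this

lemma cnb_eq_iff (φ : powerGraph G ≃g powerGraph H) (a b : G) :
    cnb (powerGraph G) a = cnb (powerGraph G) b ↔
      cnb (powerGraph H) (φ a) = cnb (powerGraph H) (φ b) := by
  rw [← map_cnb φ a, ← map_cnb φ b]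
  constructor
  · intro h; rw [h]
  · intro h
    exact Set.image_injective.mpr (φ.toEquiv.injective) h

lemma maps_fin (φ : powerGraph G ≃g powerGraph H) (x : G) (hx : IsOfFinOrder x) :
    IsOfFinOrder (φ x) := by
  by_contra hq
  -- the torsion set of G is infinite
  have hTinf : {g : G | IsOfFinOrder g}.Infinite := by
    apply Set.infinite_of_injective_forall_mem
      (f := fun n : ℕ => φ.symm ((φ x) ^ ((n : ℤ) + 2)))
    · intro m n hmn
      simp only at hmn
      have := φ.symm.toEquiv.injective hmn
      have := zpow_inj_of_inf hq this
      omega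
    · intro n
      have hadj : (powerGraph H).Adj (φ x) ((φ x) ^ ((n : ℤ) + 2)) :=
        adj_zpow_of_inf hq (by omega) (by omega)
      have hreach : (powerGraph H).Reachable (φ x) (φ (φ.symm ((φ x) ^ ((n : ℤ) + 2)))) := by
        rw [φ.apply_symm_apply]
        exact hadj.reachable
      have := SimpleGraph.Iso.reachable_iff.mp hreach
      exact fin_of_reachable this hx
  obtain ⟨y, hy, hcase⟩ := torsion_main hTinf
  have hyr : (powerGraph H).Reachable (φ x) (φ y) :=
    SimpleGraph.Iso.reachable_iff.mpr (reachable_of_fin hx hy)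
  have hk : ¬ IsOfFinOrder (φ y) := by
    intro hfin
    exact hq (fin_of_reachable hyr.symm hfin)
  rcases hcase with ⟨b, c, hby, hcy, hbc, hb, hc⟩ | hcl | huniq
  · have hb' := (cnb_eq_iff φ b y).mp hb
    have hc' := (cnb_eq_iff φ c y).mp hc
    rcases twin_of_inf hk hb' with h1 | h1
    · exact hby (φ.toEquiv.injective h1)
    rcases twin_of_inf hk hc' with h2 | h2
    · exact hcy (φ.toEquiv.injective h2)
    exact hbc (φ.toEquiv.injective (h1.trans h2.symm))
  · apply not_clique_of_inf hk
    rw [← map_cnb φ y]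
    intro z1 hz1 z2 hz2 hne
    obtain ⟨w1, hw1, rfl⟩ := hz1
    obtain ⟨w2, hw2, rfl⟩ := hz2
    exact φ.map_rel_iff.mpr (hcl hw1 hw2 (fun h => hne (by rw [h])))
  · have hinv : cnb (powerGraph H) ((φ y)⁻¹) = cnb (powerGraph H) (φ y) :=
      cnb_inv_of_inf hk
    have hz : cnb (powerGraph H) (φ (φ.symm ((φ y)⁻¹))) = cnb (powerGraph H) (φ y) := by
      rwa [φ.apply_symm_apply]
    have := huniq _ ((cnb_eq_iff φ _ y).mpr hz)
    have hfix : (φ y)⁻¹ = φ y := by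
      have := congrArg φ this
      rwa [φ.apply_symm_apply] at this
    apply hk
    apply isOfFinOrder_iff_pow_eq_one.mpr ⟨2, by norm_num, ?_⟩
    rw [pow_two]
    nth_rewrite 1 [← hfix]
    exact inv_mul_cancel (φ y)

end
theorem iso_maps_finite_order_onto_finite_order {G H : Type*} [Group G] [Group H]
    (φ : powerGraph G ≃g powerGraph H) :
    ⇑φ '' {x : G | IsOfFinOrder x} = {y : H | IsOfFinOrder y} := by
  apply Set.Subset.antisymm
  · rintro _ ⟨x, hx, rfl⟩
    exact maps_fin φ x hx
  · intro y hy
    exact ⟨φ.symm y, maps_fin φ.symm y hy, φ.apply_symm_apply y⟩
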